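/- If X is a topological space, x is a tie-point of X witnessed by closed sets A and B (i.e. A ∪ B = X, A ∩ B = {x}, and x is an accumulation point of both A and B), and there is a homeomorphism h : A → B with h(x) = x, then there is a homeomorphism F : X → X with F ∘ F = id and whose set of fixed points is exactly {x}. -/

import Mathlib

/-- A symmetric tie-point gives rise to an involution whose fixed-point set is `{x}`. -/
theorem tie_point_symmetric_involution {X : Type*} [TopologicalSpace X] (x : X)
    (A B : Set X) (hAc : IsClosed A) (hBc : IsClosed B)
    (hcov : A ∪ B = Set.univ) (hint : A ∩ B = {x})
    (haccA : AccPt x (Filter.principal A)) (haccB : AccPt x (Filter.principal B))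
    (hxA : x ∈ A) (hxB : x ∈ B)
    (h : A ≃ₜ B) (hx : h ⟨x, hxA⟩ = ⟨x, hxB⟩) :
    ∃ F : X ≃ₜ X, (∀ y, F (F y) = y) ∧ {y | F y = y} = {x} := by
  classical
  have hmemB : ∀ y : X, y ∉ A → y ∈ B := by
    intro y hy
    have : y ∈ A ∪ B := hcov ▸ Set.mem_univ y
    exact this.resolve_left hy
  set f : X → X := fun y => if hy : y ∈ A then (h ⟨y, hy⟩ : X)
    else (h.symm ⟨y, hmemB y hy⟩ : X) with hf
  -- key evaluation lemmas
  have hfA : ∀ (y : X) (hy : y ∈ A), f y = (h ⟨y, hy⟩ : X) := fun y hy => dif_pos hy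
  have hfB : ∀ (y : X) (hy : y ∈ B), f y = (h.symm ⟨y, hy⟩ : X) := by
    intro y hy
    by_cases hyA : y ∈ A
    · have hyx : y = x := by
        have : y ∈ A ∩ B := ⟨hyA, hy⟩
        rwa [hint] at this
      subst hyx
      have h1 : f y = (h ⟨y, hyA⟩ : X) := dif_pos hyA
      have h2 : h.symm ⟨y, hy⟩ = ⟨y, hyA⟩ := by
        rw [show (⟨y, hy⟩ : B) = h ⟨y, hyA⟩ from hx.symm]
        exact h.symm_apply_apply _
      rw [h1, hx, h2]
    · exact dif_neg hyA
  -- involution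
  have hinv : ∀ y, f (f y) = y := by
    intro y
    by_cases hy : y ∈ A
    · have h1 : f y = (h ⟨y, hy⟩ : X) := hfA y hy
      have h2 : f (f y) = (h.symm ⟨(h ⟨y, hy⟩ : X), (h ⟨y, hy⟩).2⟩ : X) := by
        rw [h1]; exact hfB _ (h ⟨y, hy⟩).2
      rw [h2]
      have : (⟨(h ⟨y, hy⟩ : X), (h ⟨y, hy⟩).2⟩ : B) = h ⟨y, hy⟩ := rfl
      rw [this, h.symm_apply_apply]
    · have hyB := hmemB y hy
      have h1 : f y = (h.symm ⟨y, hyB⟩ : X) := hfB y hyB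
      have h2 : f (f y) = (h ⟨(h.symm ⟨y, hyB⟩ : X), (h.symm ⟨y, hyB⟩).2⟩ : X) := by
        rw [h1]; exact hfA _ (h.symm ⟨y, hyB⟩).2
      rw [h2]
      have : (⟨(h.symm ⟨y, hyB⟩ : X), (h.symm ⟨y, hyB⟩).2⟩ : A) = h.symm ⟨y, hyB⟩ := rfl
      rw [this, h.apply_symm_apply]
  -- continuity
  have hcontA : ContinuousOn f A := by
    rw [continuousOn_iff_continuous_restrict]
    have : A.restrict f = fun a : A => (h a : X) := by
      funext a; exact hfA a a.2
    rw [show A.domRestrict f = A.restrict f from rfl, this]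
    exact continuous_subtype_val.comp h.continuous
  have hcontB : ContinuousOn f B := by
    rw [continuousOn_iff_continuous_restrict]
    have : B.restrict f = fun b : B => (h.symm b : X) := by
      funext b; exact hfB b b.2
    rw [show B.domRestrict f = B.restrict f from rfl, this]
    exact continuous_subtype_val.comp h.symm.continuous
  have hwithin : ∀ (S : Set X), IsClosed S → ContinuousOn f S →
      ∀ y, ContinuousWithinAt f S y := by
    intro S hS hcont y
    by_cases hy : y ∈ S
    · exact hcont y hy
    · exact continuousWithinAt_of_notMem_closure (by rwa [hS.closure_eq])
  have hcontf : Continuous f := by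
    rw [continuous_iff_continuousAt]
    intro y
    rw [← continuousWithinAt_univ, ← hcov]
    exact (hwithin A hAc hcontA y).union (hwithin B hBc hcontB y)
  refine ⟨⟨⟨f, f, hinv, hinv⟩, hcontf, hcontf⟩, hinv, ?_⟩
  ext y
  simp only [Set.mem_setOf_eq, Set.mem_singleton_iff]
  constructor
  · intro hy
    have hy' : f y = y := hy
    by_cases hyA : y ∈ A
    · have : y ∈ B := by
        rw [← hy', hfA y hyA]; exact (h ⟨y, hyA⟩).2
      have : y ∈ A ∩ B := ⟨hyA, this⟩
      rwa [hint] at this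
    · exfalso
      apply hyA
      rw [← hy', hfB y (hmemB y hyA)]
      exact (h.symm ⟨y, hmemB y hyA⟩).2
  · intro hy
    subst hy
    show f y = y
    rw [hfA y hxA, hx]
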